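/- Fix an integer d ≥ 1 and define the bounded sequence a : ℕ → ℝ by a_n := ∫_{(n·log 2)/d}^{((n+1)·log 2)/d} sin( z / log z ) dz. Then a is not almost convergent to zero; that is, there exists a Banach limit B with B(a) ≠ 0. -/

import Mathlib

/-- Membership in `l_∞`: the sequence is bounded. -/
def Bdd (x : ℕ → ℝ) : Prop := ∃ M : ℝ, ∀ n : ℕ, |x n| ≤ M

/-- The right shift `S` on sequences: `(Sx)_0 = 0`, `(Sx)_{n+1} = x_n`. -/
def Sfun (x : ℕ → ℝ) : ℕ → ℝ
  | 0 => 0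
  | n + 1 => x n

/-- `B` is a Banach limit on `l_∞`: a positive, normalised, shift-invariant linear
functional. -/
def IsBanachLimit (B : (ℕ → ℝ) → ℝ) : Prop :=
  (∀ x y : ℕ → ℝ, Bdd x → Bdd y → B (x + y) = B x + B y) ∧
  (∀ (c : ℝ) (x : ℕ → ℝ), Bdd x → B (c • x) = c * B x) ∧
  (∀ x : ℕ → ℝ, Bdd x → 0 ≤ x → 0 ≤ B x) ∧
  B (fun _ => (1 : ℝ)) = 1 ∧
  (∀ x : ℕ → ℝ, Bdd x → B (Sfun x) = B x)

open Filter Real Set Topology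

noncomputable section

lemma log_gt_one_of_ge_three {z : ℝ} (hz : 3 ≤ z) : 1 < Real.log z := by
  have h : Real.exp 1 < 3 := by
    have := Real.exp_one_lt_d9
    linarith
  calc 1 = Real.log (Real.exp 1) := (Real.log_exp 1).symm
    _ < Real.log z := Real.log_lt_log (Real.exp_pos 1) (lt_of_lt_of_le h hz)

lemma phi_hasDeriv {z : ℝ} (hz : 3 ≤ z) :
    HasDerivAt (fun t => t / Real.log t) ((Real.log z - 1) / (Real.log z) ^ 2) z := by
  have h1 : (1:ℝ) < Real.log z := log_gt_one_of_ge_three hz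
  have hz0 : z ≠ 0 := by linarith
  have hlog : Real.log z ≠ 0 := by linarith
  have hd : HasDerivAt Real.log (1 / z) z := by
    simpa [one_div] using Real.hasDerivAt_log hz0
  have h := (hasDerivAt_id z).div hd hlog
  convert h using 1
  · rfl
  · rfl
  · rfl
  · simp only [id]
    field_simp

lemma phi_contOn : ContinuousOn (fun t : ℝ => t / Real.log t) (Set.Ici (3:ℝ)) :=
  fun _ hz => ((phi_hasDeriv hz).differentiableAt.continuousAt).continuousWithinAt

lemma phi_unbounded (C B : ℝ) : ∃ z : ℝ, B ≤ z ∧ 3 ≤ z ∧ C ≤ z / Real.log z := by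
  have h1 := Real.tendsto_exp_div_pow_atTop 1
  have h2 : Tendsto Real.exp atTop atTop := Real.tendsto_exp_atTop
  obtain ⟨t, ht1, ht2⟩ :=
    ((h1.eventually_ge_atTop C).and (h2.eventually_ge_atTop (max B 3))).exists
  refine ⟨Real.exp t, le_trans (le_max_left _ _) ht2, le_trans (le_max_right _ _) ht2, ?_⟩
  rw [Real.log_exp]
  simpa using ht1

set_option maxHeartbeats 1000000 in
lemma sin_window (L : ℝ) (hL : 0 < L) (k : ℕ) :
    ∃ m : ℕ, 1 ≤ m ∧ (3:ℝ) ≤ (m : ℝ) * L ∧ ∀ z : ℝ, (m : ℝ) * L ≤ z → z ≤ ((m : ℝ) + k) * L →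
      1/2 ≤ Real.sin (z / Real.log z) := by
  obtain ⟨K, hK⟩ : ∃ K : ℝ, K = ((k : ℝ) + 1) * L := ⟨_, rfl⟩
  have hKpos : 0 < K := by rw [hK]; positivity
  obtain ⟨A, hA⟩ : ∃ A : ℝ, A = max 3 (Real.exp (3 * K / π)) := ⟨_, rfl⟩
  have hA3 : (3:ℝ) ≤ A := hA ▸ le_max_left _ _
  have hlogA : 3 * K / π ≤ Real.log A := by
    calc 3 * K / π = Real.log (Real.exp (3 * K / π)) := (Real.log_exp _).symm
      _ ≤ Real.log A := Real.log_le_log (Real.exp_pos _) (hA ▸ le_max_right _ _)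
  obtain ⟨N, hN⟩ : ∃ N : ℕ, N = ⌈A / Real.log A⌉₊ := ⟨_, rfl⟩
  obtain ⟨T, hT⟩ : ∃ T : ℝ, T = π / 2 + (N : ℝ) * (2 * π) := ⟨_, rfl⟩
  have hπ : (1:ℝ) ≤ 2 * π := by nlinarith [Real.pi_gt_three]
  have hφA_T : A / Real.log A ≤ T := by
    have h1 : A / Real.log A ≤ (N : ℝ) := hN ▸ Nat.le_ceil _
    have h2 : (N : ℝ) ≤ (N : ℝ) * (2 * π) := le_mul_of_one_le_right (Nat.cast_nonneg N) hπ
    have : (0:ℝ) ≤ π / 2 := by positivity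
    rw [hT]; linarith
  obtain ⟨X, hAX, hX3, hTX⟩ := phi_unbounded T A
  have hcont : ContinuousOn (fun t : ℝ => t / Real.log t) (Set.Icc A X) :=
    phi_contOn.mono (fun z hz => le_trans hA3 hz.1)
  obtain ⟨z₀, hz₀mem, hz₀⟩ := intermediate_value_Icc hAX hcont ⟨hφA_T, hTX⟩
  simp only at hz₀
  have hz₀3 : (3:ℝ) ≤ z₀ := le_trans hA3 hz₀mem.1
  obtain ⟨m, hm⟩ : ∃ m : ℕ, m = ⌈z₀ / L⌉₊ := ⟨_, rfl⟩
  have hm1 : 1 ≤ m := by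
    rw [hm, Nat.one_le_ceil_iff]
    positivity
  have hz₀m : z₀ ≤ (m : ℝ) * L := by
    have := Nat.le_ceil (z₀ / L)
    rw [← hm] at this
    calc z₀ = z₀ / L * L := by field_simp
      _ ≤ (m : ℝ) * L := by nlinarith
  have hmz₀ : (m : ℝ) * L ≤ z₀ + L := by
    have h := Nat.ceil_lt_add_one (le_of_lt (show (0:ℝ) < z₀ / L by positivity))
    rw [← hm] at h
    have : (m : ℝ) ≤ z₀ / L + 1 := h.le
    calc (m : ℝ) * L ≤ (z₀ / L + 1) * L := by nlinarith
      _ = z₀ + L := by field_simp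
  refine ⟨m, hm1, le_trans hz₀3 hz₀m, fun z hz1 hz2 => ?_⟩
  have hz₀z : z₀ ≤ z := le_trans hz₀m hz1
  have hzK : z ≤ z₀ + K := by
    have h : ((m : ℝ) + k) * L = (m : ℝ) * L + (k : ℝ) * L := by ring
    rw [hK]
    nlinarith
  -- phase bounds
  have hphase : T ≤ z / Real.log z ∧ z / Real.log z ≤ T + π / 3 := by
    rcases eq_or_lt_of_le hz₀z with heq | hlt
    · rw [← heq, hz₀]
      exact ⟨le_refl _, by nlinarith [Real.pi_pos]⟩
    · obtain ⟨c, hcmem, hc⟩ := exists_hasDerivAt_eq_slope (fun t => t / Real.log t)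
        (fun t => (Real.log t - 1) / (Real.log t) ^ 2) hlt
        (phi_contOn.mono (fun y hy => le_trans hz₀3 hy.1))
        (fun x hx => phi_hasDeriv (le_trans hz₀3 hx.1.le))
      have hc3 : (3:ℝ) ≤ c := le_trans hz₀3 hcmem.1.le
      have hlogc : 1 < Real.log c := log_gt_one_of_ge_three hc3
      have hlogcA : 3 * K / π ≤ Real.log c := by
        have : Real.log A ≤ Real.log c :=
          Real.log_le_log (by linarith) (le_trans hz₀mem.1 hcmem.1.le)
        linarith
      have hd0 : 0 ≤ (Real.log c - 1) / (Real.log c) ^ 2 := div_nonneg (by linarith) (sq_nonneg _)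
      have hd1 : (Real.log c - 1) / (Real.log c) ^ 2 ≤ π / (3 * K) := by
        have h1 : (Real.log c - 1) / (Real.log c) ^ 2 ≤ 1 / Real.log c := by
          rw [div_le_div_iff₀ (by positivity) (by linarith)]
          nlinarith
        have h2 : (1:ℝ) / Real.log c ≤ π / (3 * K) := by
          rw [div_le_div_iff₀ (by linarith) (by positivity)]
          have hx : 3 * K / π * π = 3 * K := by field_simp
          have h3 := mul_le_mul_of_nonneg_right hlogcA Real.pi_pos.le
          rw [hx] at h3
          nlinarith [h3]
        linarith
      have hne : z - z₀ ≠ 0 := by linarith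
      rw [eq_div_iff hne] at hc
      have hslope : z / Real.log z - z₀ / Real.log z₀ =
          (Real.log c - 1) / (Real.log c) ^ 2 * (z - z₀) := hc.symm
      have hzz₀K : z - z₀ ≤ K := by linarith
      have hup : (Real.log c - 1) / (Real.log c) ^ 2 * (z - z₀) ≤ π / 3 := by
        calc (Real.log c - 1) / (Real.log c) ^ 2 * (z - z₀) ≤ π / (3 * K) * K := by
              apply mul_le_mul hd1 hzz₀K (by linarith) (by positivity)
          _ = π / 3 := by field_simp
      constructor
      · rw [← hz₀]
        nlinarith [mul_nonneg hd0 (by linarith : (0:ℝ) ≤ z - z₀)]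
      · rw [show z / Real.log z = z₀ / Real.log z₀ +
            (Real.log c - 1) / (Real.log c) ^ 2 * (z - z₀) by linarith [hslope]]
        rw [hz₀]
        linarith
  -- conclude about sin
  obtain ⟨θ, hθ⟩ : ∃ θ : ℝ, θ = z / Real.log z - (N : ℝ) * (2 * π) := ⟨_, rfl⟩
  have hsin : Real.sin (z / Real.log z) = Real.sin θ := by
    rw [show z / Real.log z = θ + (N : ℝ) * (2 * π) by rw [hθ]; ring]
    exact Real.sin_add_nat_mul_two_pi θ N
  rw [hsin]
  have hθ1 : π / 2 ≤ θ := by rw [hθ]; rw [hT] at hphase; linarith [hphase.1]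
  have hθ2 : θ ≤ π / 2 + π / 3 := by rw [hθ]; rw [hT] at hphase; linarith [hphase.2]
  have : Real.sin θ = Real.cos (θ - π / 2) := by
    rw [show θ - π/2 = -(π/2 - θ) by ring, Real.cos_neg, Real.cos_pi_div_two_sub]
  rw [this, ← Real.cos_pi_div_three]
  apply Real.cos_le_cos_of_nonneg_of_le_pi (by linarith) (by linarith [Real.pi_pos]) (by linarith)

noncomputable def UF : Ultrafilter ℕ := Ultrafilter.of atTop

lemma UF_le : (UF : Filter ℕ) ≤ atTop := Ultrafilter.of_le _

set_option maxHeartbeats 1000000 in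
lemma exists_banach_limit_ge (a : ℕ → ℝ) (c : ℝ) (ha : Bdd a)
    (h : ∀ k : ℕ, ∃ m : ℕ, 1 ≤ m ∧ ∀ i < k, c ≤ a (m + i)) :
    ∃ B : (ℕ → ℝ) → ℝ, IsBanachLimit B ∧ c ≤ B a := by
  choose mf hmf1 hmf2 using h
  set A : (ℕ → ℝ) → ℕ → ℝ :=
    fun x k => (∑ i ∈ Finset.range (k+1), x (mf (k+1) + i)) / ((k : ℝ) + 1) with hA
  set B : (ℕ → ℝ) → ℝ := fun x => limUnder (UF : Filter ℕ) (A x) with hB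
  have key : ∀ x : ℕ → ℝ, Bdd x → Tendsto (A x) (UF : Filter ℕ) (𝓝 (B x)) := by
    rintro x ⟨M, hM⟩
    have hMn : 0 ≤ M := le_trans (abs_nonneg _) (hM 0)
    have hmem : ∀ k, A x k ∈ Set.Icc (-M) M := by
      intro k
      have hk : (0:ℝ) < (k:ℝ) + 1 := by positivity
      have h1 : |∑ i ∈ Finset.range (k+1), x (mf (k+1) + i)| ≤ ((k:ℝ)+1) * M := by
        calc |∑ i ∈ Finset.range (k+1), x (mf (k+1) + i)|
            ≤ ∑ i ∈ Finset.range (k+1), |x (mf (k+1) + i)| := Finset.abs_sum_le_sum_abs _ _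
          _ ≤ ∑ _i ∈ Finset.range (k+1), M := Finset.sum_le_sum fun i _ => hM _
          _ = ((k:ℝ)+1) * M := by
              rw [Finset.sum_const, Finset.card_range, nsmul_eq_mul]; push_cast; ring
      have h2 : |A x k| ≤ M := by
        rw [hA]; simp only
        rw [abs_div, abs_of_pos hk, div_le_iff₀ hk]
        linarith [h1]
      exact abs_le.mp h2
    have hUF : (UF.map (A x) : Filter ℝ) ≤ Filter.principal (Set.Icc (-M) M) := by
      rw [Ultrafilter.coe_map, Filter.le_principal_iff, Filter.mem_map]
      exact Filter.univ_mem' hmem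
    obtain ⟨y, _, hly⟩ := isCompact_Icc.ultrafilter_le_nhds (UF.map (A x)) hUF
    have ht : Tendsto (A x) (UF : Filter ℕ) (𝓝 y) := by
      rwa [Ultrafilter.coe_map] at hly
    rw [hB]; simp only
    rw [ht.limUnder_eq]
    exact ht
  refine ⟨B, ⟨?_, ?_, ?_, ?_, ?_⟩, ?_⟩
  · -- additivity
    intro x y hx hy
    have hxy : A (x + y) = fun k => A x k + A y k := by
      funext k
      rw [hA]; simp only [Pi.add_apply]
      rw [Finset.sum_add_distrib, add_div]
    have ht : Tendsto (A (x + y)) (UF : Filter ℕ) (𝓝 (B x + B y)) := by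
      rw [hxy]; exact (key x hx).add (key y hy)
    exact ht.limUnder_eq
  · -- smul
    intro r x hx
    have hrx : A (r • x) = fun k => r * A x k := by
      funext k
      rw [hA]; simp only [Pi.smul_apply, smul_eq_mul]
      rw [← Finset.mul_sum, mul_div_assoc]
    have ht : Tendsto (A (r • x)) (UF : Filter ℕ) (𝓝 (r * B x)) := by
      rw [hrx]; exact (key x hx).const_mul r
    exact ht.limUnder_eq
  · -- positivity
    intro x hx hpos
    refine ge_of_tendsto' (key x hx) fun k => ?_
    rw [hA]; simp only
    apply div_nonneg _ (by positivity)
    exact Finset.sum_nonneg fun i _ => hpos _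
  · -- normalisation
    have h1 : A (fun _ => (1:ℝ)) = fun _ => (1:ℝ) := by
      funext k
      rw [hA]; simp only
      rw [Finset.sum_const, Finset.card_range, nsmul_eq_mul]
      have hk : ((k:ℝ)+1) ≠ 0 := by positivity
      push_cast
      field_simp
    have ht : Tendsto (A (fun _ => (1:ℝ))) (UF : Filter ℕ) (𝓝 1) := by
      rw [h1]; exact tendsto_const_nhds
    exact ht.limUnder_eq
  · -- shift invariance
    intro x hx
    obtain ⟨M, hM⟩ := hx
    have hdiff : ∀ k, |A (Sfun x) k - A x k| ≤ 2 * M / ((k:ℝ)+1) := by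
      intro k
      have hk : (0:ℝ) < (k:ℝ) + 1 := by positivity
      obtain ⟨n, hn⟩ : ∃ n, mf (k+1) = n + 1 :=
        ⟨mf (k+1) - 1, by have := hmf1 (k+1); omega⟩
      have hS : ∀ i, Sfun x (mf (k+1) + i) = x (n + i) := by
        intro i
        rw [show mf (k+1) + i = (n + i) + 1 by omega]
        rfl
      have e1 : ∑ i ∈ Finset.range (k+1), Sfun x (mf (k+1) + i)
          = ∑ i ∈ Finset.range (k+1), x (n + i) :=
        Finset.sum_congr rfl fun i _ => hS i
      have hsum1 : ∑ i ∈ Finset.range (k+1), Sfun x (mf (k+1) + i)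
          = x n + ∑ i ∈ Finset.range k, x (n + 1 + i) := by
        rw [e1, Finset.sum_range_succ']
        have e2 : ∑ i ∈ Finset.range k, x (n + (i + 1))
            = ∑ i ∈ Finset.range k, x (n + 1 + i) :=
          Finset.sum_congr rfl fun i _ => congrArg x (by omega)
        rw [e2, Nat.add_zero]
        exact add_comm _ _
      have hsum2 : ∑ i ∈ Finset.range (k+1), x (mf (k+1) + i)
          = (∑ i ∈ Finset.range k, x (n + 1 + i)) + x (n + 1 + k) := by
        simp only [hn]
        rw [Finset.sum_range_succ]
      rw [hA]; simp only
      rw [div_sub_div_same, hsum1, hsum2]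
      have : x n + ∑ i ∈ Finset.range k, x (n + 1 + i)
          - ((∑ i ∈ Finset.range k, x (n + 1 + i)) + x (n + 1 + k))
          = x n - x (n + 1 + k) := by ring
      rw [this, abs_div, abs_of_pos hk, div_le_div_iff₀ hk hk]
      have h1 := hM n
      have h2 := hM (n + 1 + k)
      have h3 := abs_sub (x n) (x (n+1+k))
      nlinarith [abs_sub_abs_le_abs_sub (x n) (x (n+1+k)), abs_sub_le (x n) 0 (x (n+1+k)),
        abs_nonneg (x n - x (n+1+k))]
    have htz : Tendsto (fun k => A (Sfun x) k - A x k) (UF : Filter ℕ) (𝓝 0) := by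
      apply squeeze_zero_norm hdiff
      have h0 : Tendsto (fun k : ℕ => 2 * M / ((k:ℝ)+1)) atTop (𝓝 0) := by
        have hcomp := (tendsto_const_div_atTop_nhds_zero_nat (2 * M)).comp
          (tendsto_add_atTop_nat 1)
        have heq : ((fun n : ℕ => 2 * M / (n:ℝ)) ∘ (fun a => a + 1))
            = fun k : ℕ => 2 * M / ((k:ℝ)+1) := by
          funext k; simp only [Function.comp]; norm_cast
        rwa [heq] at hcomp
      exact h0.mono_left UF_le
    have ht : Tendsto (A (Sfun x)) (UF : Filter ℕ) (𝓝 (B x)) := by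
      have := (key x ⟨M, hM⟩).add htz
      rw [add_zero] at this
      convert this using 2 with k
      ring
    exact ht.limUnder_eq
  · -- lower bound
    refine ge_of_tendsto' (key a ha) fun k => ?_
    rw [hA]; simp only
    have hk : (0:ℝ) < (k:ℝ) + 1 := by positivity
    rw [le_div_iff₀ hk]
    calc c * ((k:ℝ)+1) = ∑ _i ∈ Finset.range (k+1), c := by
          simp [Finset.sum_const]; push_cast; ring
      _ ≤ ∑ i ∈ Finset.range (k+1), a (mf (k+1) + i) :=
          Finset.sum_le_sum fun i hi => hmf2 (k+1) i (Finset.mem_range.mp hi)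


set_option maxHeartbeats 1000000 in
/-- For a fixed integer `d ≥ 1`, the bounded sequence
`a_n = ∫_{n log 2 / d}^{(n+1) log 2 / d} sin(z / log z) dz`
is not almost convergent to zero: there is a Banach limit `B` with `B(a) ≠ 0`. -/
theorem stmt_19 (d : ℕ) (hd : 1 ≤ d) :
    ∃ B : (ℕ → ℝ) → ℝ, IsBanachLimit B ∧
      B (fun n => ∫ z in ((n : ℝ) * Real.log 2 / d)..(((n : ℝ) + 1) * Real.log 2 / d),
          Real.sin (z / Real.log z)) ≠ 0 := by
  obtain ⟨L, hLdef⟩ : ∃ L : ℝ, L = Real.log 2 / d := ⟨_, rfl⟩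
  have hd0 : (0:ℝ) < d := by exact_mod_cast hd
  have hL : 0 < L := by
    rw [hLdef]
    exact div_pos (Real.log_pos one_lt_two) hd0
  set a : ℕ → ℝ := fun n => ∫ z in ((n : ℝ) * Real.log 2 / d)..(((n : ℝ) + 1) * Real.log 2 / d),
      Real.sin (z / Real.log z) with ha_def
  have hbounds : ∀ n : ℕ, ((n:ℝ) + 1) * Real.log 2 / d - (n:ℝ) * Real.log 2 / d = L := by
    intro n
    rw [hLdef]
    ring
  have hBdd : Bdd a := by
    refine ⟨L, fun n => ?_⟩
    have h := intervalIntegral.norm_integral_le_of_norm_le_const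
      (C := 1) (a := (n:ℝ) * Real.log 2 / d) (b := ((n:ℝ) + 1) * Real.log 2 / d)
      (f := fun z => Real.sin (z / Real.log z)) (fun x _ => by
        rw [Real.norm_eq_abs]
        exact abs_le.mpr ⟨Real.neg_one_le_sin _, Real.sin_le_one _⟩)
    rw [Real.norm_eq_abs] at h
    calc |a n| ≤ 1 * |((n:ℝ) + 1) * Real.log 2 / d - (n:ℝ) * Real.log 2 / d| := h
      _ = L := by rw [hbounds n, one_mul, abs_of_pos hL]
  have hwin : ∀ k : ℕ, ∃ m : ℕ, 1 ≤ m ∧ ∀ i < k, L / 2 ≤ a (m + i) := by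
    intro k
    obtain ⟨m, hm1, hm3, hsin⟩ := sin_window L hL k
    refine ⟨m, hm1, fun i hik => ?_⟩
    obtain ⟨lo, hlo⟩ : ∃ lo : ℝ, lo = ((m + i : ℕ) : ℝ) * Real.log 2 / d := ⟨_, rfl⟩
    obtain ⟨hi', hhi⟩ : ∃ hi' : ℝ, hi' = (((m + i : ℕ) : ℝ) + 1) * Real.log 2 / d := ⟨_, rfl⟩
    have hloL : lo = ((m:ℝ) + (i:ℝ)) * L := by rw [hlo, hLdef]; push_cast; ring
    have hhiL : hi' = ((m:ℝ) + (i:ℝ) + 1) * L := by rw [hhi, hLdef]; push_cast; ring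
    have hmnn : (0:ℝ) ≤ (m:ℝ) := Nat.cast_nonneg m
    have hinn : (0:ℝ) ≤ (i:ℝ) := Nat.cast_nonneg i
    have hlohi : lo ≤ hi' := by rw [hloL, hhiL]; nlinarith
    have hsub : ∀ z : ℝ, lo ≤ z → z ≤ hi' → (m:ℝ) * L ≤ z ∧ z ≤ ((m:ℝ) + k) * L := by
      intro z h1 h2
      have hik' : (i:ℝ) + 1 ≤ (k:ℝ) := by exact_mod_cast hik
      constructor
      · rw [hloL] at h1; nlinarith
      · rw [hhiL] at h2; nlinarith
    have h3z : ∀ z : ℝ, lo ≤ z → z ≤ hi' → (3:ℝ) ≤ z := by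
      intro z h1 h2
      have := (hsub z h1 h2).1
      linarith
    have hcont : ContinuousOn (fun z => Real.sin (z / Real.log z)) (Set.uIcc lo hi') := by
      rw [Set.uIcc_of_le hlohi]
      exact Real.continuous_sin.comp_continuousOn
        (phi_contOn.mono (fun z hz => h3z z hz.1 hz.2))
    have hint : IntervalIntegrable (fun z => Real.sin (z / Real.log z))
        MeasureTheory.volume lo hi' := hcont.intervalIntegrable
    have hconst : ∫ z in lo..hi', (1/2 : ℝ) = L / 2 := by
      rw [intervalIntegral.integral_const, smul_eq_mul]
      have : hi' - lo = L := by rw [hhiL, hloL]; ring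
      rw [this]; ring
    have hmono : ∫ z in lo..hi', (1/2 : ℝ) ≤ ∫ z in lo..hi', Real.sin (z / Real.log z) := by
      apply intervalIntegral.integral_mono_on hlohi
        (intervalIntegrable_const) hint
      intro z hz
      exact hsin z (hsub z hz.1 hz.2).1 (hsub z hz.1 hz.2).2
    have : a (m + i) = ∫ z in lo..hi', Real.sin (z / Real.log z) := by
      rw [ha_def, hlo, hhi]
    rw [this]
    rw [hconst] at hmono
    exact hmono
  obtain ⟨B, hB, hBa⟩ := exists_banach_limit_ge a (L / 2) hBdd hwin
  refine ⟨B, hB, ?_⟩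
  show B a ≠ 0
  intro h0
  rw [h0] at hBa
  linarith
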